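/- For every γ > 0, there exists a unique v́ ∈ (0, 1/2) such that φ^γ(v́) = 1, where φ^γ(v) = (1-v)^γ - γ(1-v)^{γ-1} v log v. -/

import Mathlib

open Real Set

noncomputable def phiF (γ v : ℝ) : ℝ :=
  (1 - v) ^ γ - γ * (1 - v) ^ (γ - 1) * v * Real.log v
noncomputable def psiF (γ v : ℝ) : ℝ :=
  (1 - v) * (2 + Real.log v) - (γ - 1) * (v * Real.log v)
noncomputable def psiF' (γ v : ℝ) : ℝ := 1 / v - γ * Real.log v - (γ + 2)

lemma hasDerivAt_psiF (γ : ℝ) {v : ℝ} (h0 : 0 < v) :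
    HasDerivAt (psiF γ) (psiF' γ v) v := by
  have hlog := Real.hasDerivAt_log h0.ne'
  have h1 : HasDerivAt (fun v : ℝ => (1 - v) * (2 + Real.log v))
      ((-1) * (2 + Real.log v) + (1 - v) * v⁻¹) v :=
    (((hasDerivAt_id v).const_sub 1)).mul (hlog.const_add 2)
  have h2 : HasDerivAt (fun v : ℝ => v * Real.log v)
      (1 * Real.log v + v * v⁻¹) v := (hasDerivAt_id v).mul hlog
  have := h1.sub (h2.const_mul (γ - 1))
  refine this.congr_deriv ?_
  unfold psiF'
  field_simp
  ring

lemma hasDerivAt_phiF (γ : ℝ) {v : ℝ} (h0 : 0 < v) (h1 : v < 1) :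
    HasDerivAt (phiF γ) (-γ * (1 - v) ^ (γ - 2) * psiF γ v) v := by
  have hv1 : (0:ℝ) < 1 - v := by linarith
  have hlog := Real.hasDerivAt_log h0.ne'
  have hbase : HasDerivAt (fun v : ℝ => 1 - v) (-1) v := (hasDerivAt_id v).const_sub 1
  have hA : HasDerivAt (fun v : ℝ => (1 - v) ^ γ)
      ((-1) * γ * (1 - v) ^ (γ - 1)) v :=
    hbase.rpow_const (Or.inl hv1.ne')
  have hB : HasDerivAt (fun v : ℝ => (1 - v) ^ (γ - 1))
      ((-1) * (γ - 1) * (1 - v) ^ (γ - 1 - 1)) v :=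
    hbase.rpow_const (Or.inl hv1.ne')
  have hC : HasDerivAt (fun v : ℝ => v * Real.log v)
      (1 * Real.log v + v * v⁻¹) v := (hasDerivAt_id v).mul hlog
  have hD : HasDerivAt (fun v : ℝ => γ * (1 - v) ^ (γ - 1) * v * Real.log v)
      (γ * (((-1) * (γ - 1) * (1 - v) ^ (γ - 1 - 1)) * (v * Real.log v)
        + (1 - v) ^ (γ - 1) * (1 * Real.log v + v * v⁻¹))) v := by
    simpa only [← mul_assoc, Pi.mul_apply] using (hB.mul hC).const_mul γ
  have := hA.sub hD
  refine this.congr_deriv ?_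
  have e1 : (1 - v) ^ (γ - 1) = (1 - v) ^ (γ - 2) * (1 - v) := by
    rw [show γ - 1 = (γ - 2) + 1 by ring, Real.rpow_add hv1, Real.rpow_one]
  have e2 : γ - 1 - 1 = γ - 2 := by ring
  rw [e2, e1]
  unfold psiF
  field_simp
  ring

lemma psiF_one (γ : ℝ) : psiF γ 1 = 0 := by
  unfold psiF; simp

lemma phiF_pos_small (γ : ℝ) (hγ : 0 < γ) {b : ℝ} (hb : 0 < b) (hb2 : b ≤ 1/2) :
    ∃ v : ℝ, 0 < v ∧ v < b ∧ 1 < phiF γ v := by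
  set c : ℝ := min 1 ((1/2 : ℝ) ^ (γ - 1)) with hcdef
  have hcpos : 0 < c := lt_min one_pos (Real.rpow_pos_of_pos (by norm_num) _)
  set p : ℝ := γ + 1 with hpdef
  set M : ℝ := p / (γ * c) + 1 with hMdef
  have hppos : 0 < p := by positivity
  have hMpos : 0 < M := by positivity
  set v : ℝ := min (b/2) (Real.exp (-M)) with hvdef
  have hv0 : 0 < v := lt_min (by linarith) (Real.exp_pos _)
  have hvb : v < b := lt_of_le_of_lt (min_le_left _ _) (by linarith)
  have hvh : v ≤ 1/2 := le_trans hvb.le hb2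
  refine ⟨v, hv0, hvb, ?_⟩
  have h1v : (0:ℝ) < 1 - v := by linarith
  have hlogv : Real.log v ≤ -M := by
    calc Real.log v ≤ Real.log (Real.exp (-M)) :=
          Real.log_le_log hv0 (min_le_right _ _)
      _ = -M := Real.log_exp _
  have t1 : 1 - p * v ≤ (1 - v) ^ γ := by
    have b1 : (1 - v) ^ p ≤ (1 - v) ^ γ :=
      Real.rpow_le_rpow_of_exponent_ge h1v (by linarith) (by linarith)
    have b2 : 1 + p * (-v) ≤ (1 + (-v)) ^ p :=
      one_add_mul_self_le_rpow_one_add (by linarith) (by linarith)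
    have e : (1 + (-v) : ℝ) = 1 - v := by ring
    rw [e] at b2
    linarith
  have hA : c ≤ (1 - v) ^ (γ - 1) := by
    rcases le_or_gt 1 γ with h | h
    · refine le_trans (min_le_right _ _) ?_
      exact Real.rpow_le_rpow (by norm_num) (by linarith) (by linarith)
    · refine le_trans (min_le_left _ _) ?_
      exact Real.one_le_rpow_of_pos_of_le_one_of_nonpos h1v (by linarith) (by linarith)
  have hnl : M ≤ -Real.log v := by linarith
  have key : c * M ≤ (1 - v) ^ (γ - 1) * (-Real.log v) :=
    mul_le_mul hA hnl hMpos.le (le_trans hcpos.le hA)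
  have t2 : γ * c * v * M ≤ -(γ * (1 - v) ^ (γ - 1) * v * Real.log v) := by
    have := mul_le_mul_of_nonneg_left key (show (0:ℝ) ≤ γ * v by positivity)
    nlinarith
  have hMcp : γ * c * M = p + γ * c := by
    rw [hMdef]
    field_simp
  have e2 : γ * c * v * M = v * p + v * (γ * c) := by
    rw [show γ * c * v * M = v * (γ * c * M) by ring, hMcp]; ring
  have hvc : 0 < v * (γ * c) := by positivity
  unfold phiF
  nlinarith [t1, t2, e2, hvc]

lemma phiF_half_lt_one (γ : ℝ) (hγ : 0 < γ) : phiF γ (1/2) < 1 := by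
  have hlh : Real.log (1/2 : ℝ) = -Real.log 2 := by
    rw [one_div, Real.log_inv]
  have e : ((1:ℝ)/2) ^ (γ - 1) * (1/2) = (1/2 : ℝ) ^ γ := by
    rw [show ((1:ℝ)/2) ^ γ = (1/2 : ℝ) ^ ((γ-1) + 1) by ring_nf,
      Real.rpow_add (by norm_num : (0:ℝ) < 1/2), Real.rpow_one]
  have e0 : phiF γ (1/2) = (1/2 : ℝ) ^ γ * (1 + γ * Real.log 2) := by
    unfold phiF
    rw [show (1:ℝ) - 1/2 = 1/2 by norm_num, hlh]
    linear_combination (γ * Real.log 2) * e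
  have hrp : ((1:ℝ)/2) ^ γ = Real.exp (-(γ * Real.log 2)) := by
    rw [Real.rpow_def_of_pos (by norm_num : (0:ℝ) < 1/2), hlh]
    ring_nf
  set t : ℝ := γ * Real.log 2 with htdef
  have ht : 0 < t := mul_pos hγ (Real.log_pos one_lt_two)
  have h1 : 1 + t < Real.exp t := by
    linarith [Real.add_one_lt_exp (ne_of_gt ht)]
  have h2 : (0:ℝ) < Real.exp (-t) := Real.exp_pos _
  have h3 : Real.exp (-t) * Real.exp t = 1 := by
    rw [← Real.exp_add]; simp
  rw [e0, hrp]
  nlinarith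

lemma psi_contra (γ : ℝ) (hγ : 0 < γ) {c ξ : ℝ} (hc0 : 0 < c) (hcξ : c < ξ)
    (hξ1 : ξ < 1) (hψc : 0 < psiF γ c) (hψξ : psiF γ ξ ≤ 0) : False := by
  have hξ0 : 0 < ξ := lt_trans hc0 hcξ
  have hcont : ∀ a b : ℝ, 0 < a → ContinuousOn (psiF γ) (Set.Icc a b) := by
    intro a b ha z hz
    exact ((hasDerivAt_psiF γ (lt_of_lt_of_le ha hz.1)).continuousAt).continuousWithinAt
  obtain ⟨s1, hs1, hs1eq⟩ := exists_hasDerivAt_eq_slope (psiF γ) (psiF' γ) hcξ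
    (hcont c ξ hc0) (fun z hz => hasDerivAt_psiF γ (lt_trans hc0 hz.1))
  obtain ⟨s2, hs2, hs2eq⟩ := exists_hasDerivAt_eq_slope (psiF γ) (psiF' γ) hξ1
    (hcont ξ 1 hξ0) (fun z hz => hasDerivAt_psiF γ (lt_trans hξ0 hz.1))
  have h1 : psiF' γ s1 < 0 := by
    rw [hs1eq]
    exact div_neg_of_neg_of_pos (by linarith) (by linarith)
  have h2 : 0 ≤ psiF' γ s2 := by
    rw [hs2eq, psiF_one]
    apply div_nonneg <;> linarith
  have hs10 : 0 < s1 := lt_trans hc0 hs1.1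
  have hlt : s1 < s2 := lt_trans hs1.2 hs2.1
  have hl : Real.log s1 < Real.log s2 := Real.log_lt_log hs10 hlt
  have hi : 1/s2 < 1/s1 := one_div_lt_one_div_of_lt hs10 hlt
  have : psiF' γ s2 < psiF' γ s1 := by
    unfold psiF'
    nlinarith
  linarith

lemma roots_unique_lt (γ : ℝ) (hγ : 0 < γ) {x y : ℝ} (hx : x ∈ Set.Ioo (0:ℝ) (1/2))
    (hy : y ∈ Set.Ioo (0:ℝ) (1/2)) (hfx : phiF γ x = 1) (hfy : phiF γ y = 1)
    (hxy : x < y) : False := by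
  obtain ⟨v1, hv10, hv1x, hv1gt⟩ := phiF_pos_small γ hγ hx.1 (le_of_lt hx.2)
  have hcont : ∀ a b : ℝ, 0 < a → b < 1 → ContinuousOn (phiF γ) (Set.Icc a b) := by
    intro a b ha hb z hz
    exact ((hasDerivAt_phiF γ (lt_of_lt_of_le ha hz.1)
      (lt_of_le_of_lt hz.2 hb)).continuousAt).continuousWithinAt
  obtain ⟨c, hc, hceq⟩ := exists_hasDerivAt_eq_slope (phiF γ)
    (fun v => -γ * (1 - v) ^ (γ - 2) * psiF γ v) hv1x
    (hcont v1 x hv10 (by linarith [hx.2]))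
    (fun z hz => hasDerivAt_phiF γ (lt_trans hv10 hz.1) (by linarith [hz.2, hx.2]))
  have hcneg : -γ * (1 - c) ^ (γ - 2) * psiF γ c < 0 := by
    rw [hceq, hfx]
    exact div_neg_of_neg_of_pos (by linarith) (by linarith)
  have hc1 : c < 1 := by linarith [hc.2, hx.2]
  have hpowc : (0:ℝ) < (1 - c) ^ (γ - 2) := Real.rpow_pos_of_pos (by linarith) _
  have hpsic : 0 < psiF γ c := by
    by_contra h
    push_neg at h
    nlinarith [mul_nonneg (mul_pos hγ hpowc).le (neg_nonneg.mpr h)]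
  obtain ⟨ξ, hξ, hξeq⟩ := exists_hasDerivAt_eq_slope (phiF γ)
    (fun v => -γ * (1 - v) ^ (γ - 2) * psiF γ v) hxy
    (hcont x y hx.1 (by linarith [hy.2]))
    (fun z hz => hasDerivAt_phiF γ (lt_trans hx.1 hz.1) (by linarith [hz.2, hy.2]))
  have hξzero : -γ * (1 - ξ) ^ (γ - 2) * psiF γ ξ = 0 := by
    rw [hξeq, hfx, hfy]; simp
  have hξ1 : ξ < 1 := by linarith [hξ.2, hy.2]
  have hpowξ : (0:ℝ) < (1 - ξ) ^ (γ - 2) := Real.rpow_pos_of_pos (by linarith) _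
  have hpsiξ : psiF γ ξ = 0 := by
    rcases mul_eq_zero.mp hξzero with h' | h'
    · exfalso; nlinarith
    · exact h'
  exact psi_contra γ hγ (lt_trans hv10 hc.1) (lt_trans hc.2 hξ.1) hξ1 hpsic
    (le_of_eq hpsiξ)

theorem phiFL_eq_one_unique (γ : ℝ) (hγ : 0 < γ) :
    ∃! v : ℝ, v ∈ Set.Ioo (0 : ℝ) (1/2) ∧
      (1 - v) ^ γ - γ * (1 - v) ^ (γ - 1) * v * Real.log v = 1 := by
  obtain ⟨v0, hv00, hv0b, hv0gt⟩ := phiF_pos_small γ hγ (by norm_num : (0:ℝ) < 1/2)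
    le_rfl
  have hcont : ContinuousOn (phiF γ) (Set.Icc v0 (1/2)) := by
    intro z hz
    exact ((hasDerivAt_phiF γ (lt_of_lt_of_le hv00 hz.1)
      (lt_of_le_of_lt hz.2 (by norm_num))).continuousAt).continuousWithinAt
  have hIVT := intermediate_value_Ioo' (le_of_lt hv0b) hcont
  obtain ⟨r, hr, hreq⟩ := hIVT ⟨phiF_half_lt_one γ hγ, hv0gt⟩
  have hrmem : r ∈ Set.Ioo (0:ℝ) (1/2) := ⟨lt_trans hv00 hr.1, hr.2⟩
  refine ⟨r, ⟨hrmem, hreq⟩, ?_⟩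
  rintro y ⟨hymem, hyeq⟩
  rcases lt_trichotomy y r with h | h | h
  · exact absurd (roots_unique_lt γ hγ hymem hrmem hyeq hreq h) (by simp)
  · exact h
  · exact absurd (roots_unique_lt γ hγ hrmem hymem hreq hyeq h) (by simp)
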